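/- Let H be an n_r×n_t complex matrix with n_t ≤ n_r, and let n_t ≤ k ≤ n_r. Then there exists a subset S of rows with |S| = k such that log det(I + H_S H_S†) ≥ log det(I + H H†) − log( C(n_r,k) / C(n_r−n_t, k−n_t) ). -/

import Mathlib

open Matrix



namespace CapAux

variable {R : Type*} [CommRing R]

lemma det_piecewise_one {n : Type*} [Fintype n] [DecidableEq n]
    (A : Matrix n n R) (s : Finset n) :
    Matrix.det (s.piecewise A (1 : Matrix n n R) : Matrix n n R) =
      (A.submatrix (fun i : {x // x ∈ s} => (i : n))
        (fun i : {x // x ∈ s} => (i : n))).det := by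
  classical
  let e : {x // x ∈ s} ⊕ {x // x ∉ s} ≃ n := Equiv.sumCompl (· ∈ s)
  have h : Matrix.submatrix ((s.piecewise A (1 : Matrix n n R) : Matrix n n R)) e e =
      Matrix.fromBlocks
        (A.submatrix (fun i : {x // x ∈ s} => (i : n)) (fun i : {x // x ∈ s} => (i : n)))
        (A.submatrix (fun i : {x // x ∈ s} => (i : n)) (fun i : {x // x ∉ s} => (i : n)))
        0 1 := by
    ext i j
    delta Matrix.submatrix
    cases i with
    | inl i =>
      cases j with
      | inl j => simp [e, Finset.piecewise, i.2]
      | inr j => simp [e, Finset.piecewise, i.2]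
    | inr i =>
      cases j with
      | inl j =>
        have hne : (i : n) ≠ (j : n) := fun h => i.2 (h ▸ j.2)
        simp [e, Finset.piecewise, i.2, Matrix.one_apply, hne]
      | inr j =>
        simp [e, Finset.piecewise, i.2, Matrix.one_apply, Subtype.ext_iff]
        congr 1
  calc Matrix.det (s.piecewise A (1 : Matrix n n R) : Matrix n n R)
      = (Matrix.submatrix ((s.piecewise A (1 : Matrix n n R) : Matrix n n R)) e e).det :=
        (det_submatrix_equiv_self e _).symm
    _ = _ := by rw [h, Matrix.det_fromBlocks_zero₂₁, Matrix.det_one, mul_one]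

lemma det_one_add {n : Type*} [Fintype n] [DecidableEq n] (A : Matrix n n R) :
    (1 + A).det = ∑ s : Finset n,
      (A.submatrix (fun i : {x // x ∈ s} => (i : n))
        (fun i : {x // x ∈ s} => (i : n))).det := by
  classical
  have h : (1 + A) = (A + 1 : Matrix n n R) := add_comm _ _
  rw [h]
  calc (A + 1 : Matrix n n R).det
      = (Matrix.detRowAlternating (R := R) (n := n)).toMultilinearMap (A + (1 : Matrix n n R)) := rfl
    _ = ∑ s : Finset n, (Matrix.detRowAlternating (R := R) (n := n)).toMultilinearMap ((s.piecewise A (1 : Matrix n n R) : Matrix n n R)) :=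
        (Matrix.detRowAlternating (R := R) (n := n)).toMultilinearMap.map_add_univ A (1 : Matrix n n R)
    _ = ∑ s : Finset n, Matrix.det (s.piecewise A (1 : Matrix n n R) : Matrix n n R) := rfl
    _ = _ := Finset.sum_congr rfl fun s _ => det_piecewise_one A s




open scoped ComplexOrder

lemma submatrix_mul_conjTranspose_self {m n l : Type*} [Fintype n] [Fintype m]
    (A : Matrix m n ℂ) (r : l → m) :
    (A * Aᴴ).submatrix r r = (A.submatrix r id) * (A.submatrix r id)ᴴ := by
  rw [conjTranspose_submatrix]
  simpa using (submatrix_mul_equiv A Aᴴ r (Equiv.refl n) r).symm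

lemma det_mul_conjTranspose_reindex {m m' n : Type*} [Fintype m] [Fintype m']
    [DecidableEq m] [DecidableEq m'] [Fintype n]
    (B : Matrix m n ℂ) (e : m' ≃ m) :
    ((B.submatrix e id) * (B.submatrix e id)ᴴ).det = (B * Bᴴ).det := by
  rw [← submatrix_mul_conjTranspose_self B e, det_submatrix_equiv_self]

lemma det_re_nonneg {m : Type*} [Fintype m] [DecidableEq m] {A : Matrix m m ℂ}
    (hA : A.PosSemidef) : 0 ≤ A.det.re := by
  rw [hA.isHermitian.det_eq_prod_eigenvalues]
  rw [← RCLike.ofReal_prod]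
  exact_mod_cast Finset.prod_nonneg fun i _ => hA.eigenvalues_nonneg i

lemma det_mul_conjTranspose_eq_zero {m n : Type*} [Fintype m] [Fintype n]
    [DecidableEq m] [DecidableEq n]
    (B : Matrix m n ℂ) (h : Fintype.card n < Fintype.card m) :
    (B * Bᴴ).det = 0 := by
  by_contra hd
  have hu : IsUnit (B * Bᴴ) := (Matrix.isUnit_iff_isUnit_det _).2 (isUnit_iff_ne_zero.2 hd)
  have h1 : (B * Bᴴ).rank = Fintype.card m := Matrix.rank_of_isUnit _ hu
  have h2 : (B * Bᴴ).rank ≤ Fintype.card n :=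
    (Matrix.rank_mul_le_left B Bᴴ).trans (Matrix.rank_le_card_width B)
  omega

noncomputable def subsetEquiv {α : Type*} {S : Finset α} (s : Finset {x // x ∈ S}) :
    {x // x ∈ s} ≃ {x : α // x ∈ s.map (Function.Embedding.subtype (· ∈ S))} :=
  Equiv.ofBijective (fun x => ⟨((x : {x // x ∈ S}) : α), by
      simpa using Finset.mem_map_of_mem (Function.Embedding.subtype (· ∈ S)) x.2⟩) (by
    constructor
    · intro a b h
      have h' : ((a : {x // x ∈ S}) : α) = ((b : {x // x ∈ S}) : α) := Subtype.mk_eq_mk.mp h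
      exact Subtype.ext (Subtype.ext h')
    · rintro ⟨y, hy⟩
      obtain ⟨a, has, ha⟩ := Finset.mem_map.1 hy
      exact ⟨⟨a, has⟩, Subtype.ext ha⟩)

lemma expand_re {m : Type*} [Fintype m] [DecidableEq m] {nt : ℕ} (B : Matrix m (Fin nt) ℂ) :
    ((1 + B * Bᴴ).det).re =
      ∑ s : Finset m,
        ((B.submatrix (fun i : {x // x ∈ s} => (i : m)) id *
          (B.submatrix (fun i : {x // x ∈ s} => (i : m)) id)ᴴ).det).re := by
  rw [det_one_add (B * Bᴴ), Complex.re_sum]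
  refine Finset.sum_congr rfl fun s _ => ?_
  rw [submatrix_mul_conjTranspose_self]

lemma expand_subset {nt : ℕ} {α : Type*} [Fintype α] [DecidableEq α]
    (H : Matrix α (Fin nt) ℂ) (S : Finset α) :
    ((1 + (H.submatrix (fun i : {x // x ∈ S} => (i : α)) id) *
        (H.submatrix (fun i : {x // x ∈ S} => (i : α)) id)ᴴ).det).re
      = ∑ T ∈ S.powerset,
        ((H.submatrix (fun i : {x // x ∈ T} => (i : α)) id *
          (H.submatrix (fun i : {x // x ∈ T} => (i : α)) id)ᴴ).det).re := by
  classical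
  have hset : S.powerset =
      Finset.univ.map (Finset.mapEmbedding (Function.Embedding.subtype (· ∈ S))).toEmbedding := by
    ext T
    simp only [Finset.mem_powerset, Finset.mem_map, Finset.mem_univ, true_and,
      RelEmbedding.coe_toEmbedding, Finset.mapEmbedding_apply]
    constructor
    · intro hT
      refine ⟨T.subtype (· ∈ S), ?_⟩
      rw [Finset.subtype_map]
      exact Finset.filter_true_of_mem fun x hx => hT hx
    · rintro ⟨s, rfl⟩
      intro x hx
      obtain ⟨a, -, rfl⟩ := Finset.mem_map.1 hx
      exact a.2
  rw [expand_re, hset, Finset.sum_map]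
  refine Finset.sum_congr rfl fun s _ => ?_
  simp only [RelEmbedding.coe_toEmbedding, Finset.mapEmbedding_apply]
  have h1 : (H.submatrix (fun i : {x // x ∈ S} => (i : α)) id).submatrix
      (fun i : {x // x ∈ s} => (i : {x // x ∈ S})) id
      = (H.submatrix
          (fun i : {x : α // x ∈ s.map (Function.Embedding.subtype (· ∈ S))} => (i : α))
          id).submatrix (subsetEquiv s) id := rfl
  rw [h1, det_mul_conjTranspose_reindex]
  rfl




lemma card_filter_superset {α : Type*} [Fintype α] [DecidableEq α] (k : ℕ) (T : Finset α)
    (hT : T.card ≤ k) :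
    ((Finset.univ.powersetCard k).filter (fun S => T ⊆ S)).card
      = (Fintype.card α - T.card).choose (k - T.card) := by
  rw [← Finset.card_compl T, ← Finset.card_powersetCard (k - T.card) Tᶜ]
  apply Finset.card_nbij' (fun S => S \ T) (fun U => U ∪ T)
  · intro S hS
    simp only [Finset.mem_coe, Finset.mem_filter, Finset.mem_powersetCard] at hS
    obtain ⟨⟨-, hcard⟩, hTS⟩ := hS
    simp only [Finset.mem_coe, Finset.mem_powersetCard]
    constructor
    · intro x hx
      simp only [Finset.mem_sdiff] at hx
      simp [hx.2]
    · rw [Finset.card_sdiff_of_subset hTS, hcard]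
  · intro U hU
    simp only [Finset.mem_coe, Finset.mem_powersetCard] at hU
    obtain ⟨hUsub, hUcard⟩ := hU
    have hdisj : Disjoint U T := by
      rw [Finset.disjoint_right]
      intro x hxT hxU
      have := hUsub hxU
      simp [hxT] at this
    simp only [Finset.mem_coe, Finset.mem_filter, Finset.mem_powersetCard]
    refine ⟨⟨Finset.subset_univ _, ?_⟩, Finset.subset_union_right⟩
    rw [Finset.card_union_of_disjoint hdisj, hUcard]
    omega
  · intro S hS
    simp only [Finset.mem_coe, Finset.mem_filter] at hS
    exact Finset.sdiff_union_of_subset hS.2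
  · intro U hU
    simp only [Finset.mem_coe, Finset.mem_powersetCard] at hU
    have hdisj : Disjoint U T := by
      rw [Finset.disjoint_right]
      intro x hxT hxU
      have := hU.1 hxU
      simp [hxT] at this
    beta_reduce
    rw [Finset.union_sdiff_right]
    exact Finset.sdiff_eq_self_of_disjoint hdisj

lemma choose_sub_step {n k a : ℕ} (h1 : a < k) (h2 : k ≤ n) :
    (n - (a + 1)).choose (k - (a + 1)) ≤ (n - a).choose (k - a) := by
  have hn : n - a = (n - (a + 1)) + 1 := by omega
  have hk : k - a = (k - (a + 1)) + 1 := by omega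
  rw [hn, hk, Nat.choose_succ_succ]
  exact Nat.le_add_right _ _

lemma choose_sub_mono {n k : ℕ} (h2 : k ≤ n) :
    ∀ j t, t + j ≤ k → (n - (t + j)).choose (k - (t + j)) ≤ (n - t).choose (k - t) := by
  intro j
  induction j with
  | zero => intro t _; exact le_refl _
  | succ j ih =>
    intro t h
    have h' : (t + j) < k := by omega
    calc (n - (t + (j + 1))).choose (k - (t + (j + 1)))
        = (n - ((t + j) + 1)).choose (k - ((t + j) + 1)) := by ring_nf
      _ ≤ (n - (t + j)).choose (k - (t + j)) := choose_sub_step h' h2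
      _ ≤ (n - t).choose (k - t) := ih t (by omega)




noncomputable def rdet {nt n : ℕ} (H : Matrix (Fin n) (Fin nt) ℂ) (T : Finset (Fin n)) : ℝ :=
  ((H.submatrix (fun i : {x : Fin n // x ∈ T} => (i : Fin n)) id *
    (H.submatrix (fun i : {x : Fin n // x ∈ T} => (i : Fin n)) id)ᴴ).det).re

noncomputable def fdet {nt n : ℕ} (H : Matrix (Fin n) (Fin nt) ℂ) (S : Finset (Fin n)) : ℝ :=
  ((1 + H.submatrix (fun i : {x : Fin n // x ∈ S} => (i : Fin n)) id *
    (H.submatrix (fun i : {x : Fin n // x ∈ S} => (i : Fin n)) id)ᴴ).det).re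

lemma rdet_nonneg {nt n : ℕ} (H : Matrix (Fin n) (Fin nt) ℂ) (T : Finset (Fin n)) :
    0 ≤ rdet H T :=
  det_re_nonneg (Matrix.posSemidef_self_mul_conjTranspose _)

lemma rdet_eq_zero {nt n : ℕ} (H : Matrix (Fin n) (Fin nt) ℂ) {T : Finset (Fin n)}
    (hTc : nt < T.card) : rdet H T = 0 := by
  unfold rdet
  rw [det_mul_conjTranspose_eq_zero]
  · rfl
  · simpa [Fintype.card_coe] using hTc

lemma rdet_empty {nt n : ℕ} (H : Matrix (Fin n) (Fin nt) ℂ) :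
    rdet H (∅ : Finset (Fin n)) = 1 := by
  haveI : IsEmpty {x : Fin n // x ∈ (∅ : Finset (Fin n))} :=
    ⟨fun x => absurd x.2 (Finset.notMem_empty _)⟩
  unfold rdet
  rw [Matrix.det_isEmpty]
  rfl

lemma fdet_eq {nt n : ℕ} (H : Matrix (Fin n) (Fin nt) ℂ) (S : Finset (Fin n)) :
    fdet H S = ∑ T ∈ S.powerset, rdet H T :=
  expand_subset H S

lemma sum_rdet {nt n : ℕ} (H : Matrix (Fin n) (Fin nt) ℂ) :
    ((1 + H * Hᴴ).det).re = ∑ T : Finset (Fin n), rdet H T :=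
  expand_re H




end CapAux

open CapAux

/-- Receiver selection, `n_t ≤ k ≤ n_r`: some choice of `k` rows `S` satisfies
`log det (I + H_S H_Sᴴ) ≥ log det (I + H Hᴴ) − log(C(n_r,k)/C(n_r−n_t,k−n_t))`. -/
theorem exists_row_subset_capacity_bound_large_k
    (nr nt k : ℕ) (hnt : nt ≤ nr) (hk1 : nt ≤ k) (hk2 : k ≤ nr)
    (H : Matrix (Fin nr) (Fin nt) ℂ) :
    ∃ S : Finset (Fin nr), S.card = k ∧
      Real.log ((1 +
          (H.submatrix (fun i : {x : Fin nr // x ∈ S} => (i : Fin nr)) id) *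
          (H.submatrix (fun i : {x : Fin nr // x ∈ S} => (i : Fin nr)) id)ᴴ).det).re ≥
        Real.log ((1 + H * Hᴴ).det).re -
          Real.log ((nr.choose k : ℝ) / ((nr - nt).choose (k - nt))) := by
  classical
  set c1 : ℕ := nr.choose k with hc1def
  set c2 : ℕ := (nr - nt).choose (k - nt) with hc2def
  set D : ℝ := ((1 + H * Hᴴ).det).re with hDdef
  have hDsum : D = ∑ T : Finset (Fin nr), rdet H T := sum_rdet H
  have hD1 : (1 : ℝ) ≤ D := by
    rw [hDsum]
    calc (1:ℝ) = rdet H ∅ := (rdet_empty H).symm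
      _ ≤ ∑ T : Finset (Fin nr), rdet H T :=
        Finset.single_le_sum (fun T _ => rdet_nonneg H T) (Finset.mem_univ _)
  set F : Finset (Finset (Fin nr)) := Finset.univ.powersetCard k with hFdef
  have hFcard : F.card = c1 := by
    rw [hFdef, Finset.card_powersetCard, Finset.card_univ, Fintype.card_fin]
  have hFne : F.Nonempty := by
    rw [hFdef]
    exact Finset.powersetCard_nonempty.2 (by simp [hk2])
  have h1 : ∑ S ∈ F, fdet H S
      = ∑ T : Finset (Fin nr), ((F.filter (fun S => T ⊆ S)).card : ℝ) * rdet H T := by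
    calc ∑ S ∈ F, fdet H S = ∑ S ∈ F, ∑ T ∈ S.powerset, rdet H T :=
          Finset.sum_congr rfl fun S _ => fdet_eq H S
      _ = ∑ S ∈ F, ∑ T : Finset (Fin nr), if T ⊆ S then rdet H T else 0 := by
          refine Finset.sum_congr rfl fun S _ => ?_
          rw [← Finset.sum_filter]
          congr 1
          ext T
          simp
      _ = ∑ T : Finset (Fin nr), ∑ S ∈ F, if T ⊆ S then rdet H T else 0 := Finset.sum_comm
      _ = _ := by
          refine Finset.sum_congr rfl fun T _ => ?_
          rw [← Finset.sum_filter, Finset.sum_const, nsmul_eq_mul]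
  have h2 : ∀ T : Finset (Fin nr),
      (c2 : ℝ) * rdet H T ≤ ((F.filter (fun S => T ⊆ S)).card : ℝ) * rdet H T := by
    intro T
    by_cases hc : T.card ≤ nt
    · have hcard : (F.filter (fun S => T ⊆ S)).card = (nr - T.card).choose (k - T.card) := by
        rw [hFdef, card_filter_superset k T (hc.trans hk1)]
        simp [Fintype.card_fin]
      rw [hcard]
      apply mul_le_mul_of_nonneg_right _ (rdet_nonneg H T)
      have hmono := choose_sub_mono (n := nr) (k := k) hk2 (nt - T.card) T.card (by omega)
      have heq : T.card + (nt - T.card) = nt := by omega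
      rw [heq] at hmono
      exact_mod_cast hmono
    · rw [rdet_eq_zero H (lt_of_not_ge hc), mul_zero, mul_zero]
  have hsum : (c2 : ℝ) * D ≤ ∑ S ∈ F, fdet H S := by
    rw [h1, hDsum, Finset.mul_sum]
    exact Finset.sum_le_sum fun T _ => h2 T
  have hc1pos : 0 < c1 := Nat.choose_pos hk2
  have hc2pos : 0 < c2 := Nat.choose_pos (by omega)
  have hc1R : (0:ℝ) < c1 := by exact_mod_cast hc1pos
  have hc2R : (0:ℝ) < c2 := by exact_mod_cast hc2pos
  have hD0 : (0:ℝ) < D := lt_of_lt_of_le one_pos hD1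
  have hex : ∃ S ∈ F, (c2 : ℝ) * D / c1 ≤ fdet H S := by
    apply Finset.exists_le_of_sum_le hFne
    rw [Finset.sum_const, hFcard, nsmul_eq_mul]
    have hmul : (c1:ℝ) * ((c2:ℝ) * D / c1) = (c2:ℝ) * D := by
      field_simp
    rw [hmul]
    exact hsum
  obtain ⟨S, hSF, hSle⟩ := hex
  have hSk : S.card = k := by
    rw [hFdef] at hSF
    exact (Finset.mem_powersetCard.1 hSF).2
  refine ⟨S, hSk, ?_⟩
  have hq : (0:ℝ) < (c2 : ℝ) * D / c1 := div_pos (mul_pos hc2R hD0) hc1R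
  have hfpos : (0:ℝ) < fdet H S := lt_of_lt_of_le hq hSle
  have hlog : Real.log ((c2:ℝ) * D / c1) ≤ Real.log (fdet H S) :=
    (Real.log_le_log_iff hq hfpos).2 hSle
  have hlogeq : Real.log ((c2:ℝ) * D / c1) = Real.log D - Real.log ((c1:ℝ) / (c2:ℝ)) := by
    rw [Real.log_div (by positivity) (ne_of_gt hc1R),
      Real.log_mul (ne_of_gt hc2R) (ne_of_gt hD0),
      Real.log_div (ne_of_gt hc1R) (ne_of_gt hc2R)]
    ring
  show Real.log (fdet H S) ≥ Real.log D - Real.log ((c1:ℝ) / (c2:ℝ))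
  rw [ge_iff_le, ← hlogeq]
  exact hlog
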